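/- Let B : P → M(P), x ↦ dB_x, be any continuous section of the barycenter map (i.e. ∫_P z dB_x(z) = x for all x ∈ P). For a positive integer N define B_N(f)(x) := ∫_P f(z) dB_x^N(z), where dB_x^N is the dilated N-fold convolution power of dB_x. Then for every f ∈ C(P), B_N(f) converges uniformly on P to f as N → ∞. -/

import Mathlib

/- Setting: `P ⊆ ℝ^m` is a compact convex polytope (convex hull of a finite set) with
nonempty interior.  `M(P)` is modelled by measures on `ℝ^m` that are probability measures
giving full mass to `P`; weak-* continuity of `x ↦ dB_x` is expressed by continuity of
`x ↦ ∫ f dB_x` for every `f` continuous on `P`. -/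

open MeasureTheory Filter Set
open scoped Topology ENNReal RealInnerProductSpace

noncomputable section

/-- The dilated `N`-fold convolution power `dB^N = (D_{1/N})_* (dB ∗ ⋯ ∗ dB)` of a measure. -/
def dilConvPow {m : ℕ} (μ : Measure (EuclideanSpace ℝ (Fin m))) (N : ℕ) :
    Measure (EuclideanSpace ℝ (Fin m)) :=
  Measure.map (fun z : Fin N → EuclideanSpace ℝ (Fin m) => (N : ℝ)⁻¹ • ∑ i, z i)
    (Measure.pi fun _ => μ)

variable {m : ℕ}


lemma aux_ae_pi_mem {P : Set (EuclideanSpace ℝ (Fin m))}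
    (μ : Measure (EuclideanSpace ℝ (Fin m))) [IsProbabilityMeasure μ]
    (hsupp : μ Pᶜ = 0) (N : ℕ) :
    ∀ᵐ w ∂(Measure.pi fun _ : Fin N => μ), ∀ i, w i ∈ P := by
  rw [ae_all_iff]
  intro i
  have h : (Measure.pi fun _ : Fin N => μ) (Function.eval i ⁻¹' Pᶜ) = 0 :=
    Measure.pi_eval_preimage_null _ hsupp
  exact h

lemma aux_sum_sq {P : Set (EuclideanSpace ℝ (Fin m))} {R : ℝ}
    (μ : Measure (EuclideanSpace ℝ (Fin m))) [IsProbabilityMeasure μ]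
    (hsupp : μ Pᶜ = 0) (x : EuclideanSpace ℝ (Fin m))
    (hbary : (∫ z, z ∂μ) = x) (hR : ∀ z ∈ P, ‖z - x‖ ≤ R) (N : ℕ) :
    ∫ w, ‖(∑ i, w i) - (N : ℝ) • x‖ ^ 2 ∂(Measure.pi fun _ : Fin N => μ)
      ≤ N * R ^ 2 := by
  have hμP : ∀ᵐ a ∂μ, a ∈ P := by
    rw [ae_iff]; exact hsupp
  have hid_int : Integrable (fun a => a) μ := by
    refine Integrable.mono' (integrable_const (R + ‖x‖)) aestronglyMeasurable_id ?_
    filter_upwards [hμP] with a ha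
    calc ‖a‖ = ‖(a - x) + x‖ := by rw [sub_add_cancel]
    _ ≤ ‖a - x‖ + ‖x‖ := norm_add_le _ _
    _ ≤ R + ‖x‖ := by have := hR a ha; linarith
  have hax_int : Integrable (fun a => a - x) μ := hid_int.sub (integrable_const x)
  have hmean : (∫ a, (a - x) ∂μ) = 0 := by
    rw [integral_sub hid_int (integrable_const x), hbary, integral_const]
    simp
  have hsq_int : Integrable (fun a => ‖a - x‖ ^ 2) μ := by
    refine Integrable.mono' (integrable_const (R ^ 2))
      ((continuous_id.sub continuous_const).norm.pow 2).aestronglyMeasurable ?_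
    filter_upwards [hμP] with a ha
    rw [Real.norm_eq_abs, abs_of_nonneg (by positivity)]
    exact pow_le_pow_left₀ (norm_nonneg _) (hR a ha) 2
  have hVle : (∫ a, ‖a - x‖ ^ 2 ∂μ) ≤ R ^ 2 := by
    calc (∫ a, ‖a - x‖ ^ 2 ∂μ) ≤ ∫ _, R ^ 2 ∂μ := by
          refine integral_mono_ae hsq_int (integrable_const _) ?_
          filter_upwards [hμP] with a ha
          exact pow_le_pow_left₀ (norm_nonneg _) (hR a ha) 2
    _ = R ^ 2 := by simp
  induction N with
  | zero => simp
  | succ N ih =>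
    set ν : Measure (Fin N → EuclideanSpace ℝ (Fin m)) :=
      Measure.pi fun _ : Fin N => μ with hν
    set S : (Fin N → EuclideanSpace ℝ (Fin m)) → EuclideanSpace ℝ (Fin m) :=
      fun v => (∑ j, v j) - (N : ℝ) • x with hS
    have hSnorm : ∀ v : Fin N → EuclideanSpace ℝ (Fin m), (∀ j, v j ∈ P) →
        ‖S v‖ ≤ N * R := by
      intro v hv
      have hsv : S v = ∑ j, (v j - x) := by
        rw [hS, Finset.sum_sub_distrib, Finset.sum_const, Finset.card_univ, Fintype.card_fin,
          ← Nat.cast_smul_eq_nsmul ℝ]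
      rw [hsv]
      calc ‖∑ j, (v j - x)‖ ≤ ∑ j : Fin N, ‖v j - x‖ := norm_sum_le _ _
      _ ≤ ∑ _j : Fin N, R := Finset.sum_le_sum fun j _ => hR _ (hv j)
      _ = N * R := by simp [mul_comm]
    set g : EuclideanSpace ℝ (Fin m) × (Fin N → EuclideanSpace ℝ (Fin m)) → ℝ :=
      fun p => ‖(p.1 - x) + S p.2‖ ^ 2 with hg
    have hScont : Continuous S :=
      (continuous_finset_sum _ fun j _ => continuous_apply j).sub continuous_const
    have hgcont : Continuous g :=
      (((continuous_fst.sub continuous_const).add (hScont.comp continuous_snd)).norm).pow 2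
    have hQ : ν {v | ∀ j, v j ∈ P}ᶜ = 0 := by
      have h := aux_ae_pi_mem μ hsupp N
      rw [ae_iff] at h
      exact h
    have haeprod : ∀ᵐ p ∂(μ.prod ν), p.1 ∈ P ∧ ∀ j, p.2 j ∈ P := by
      rw [ae_iff]
      have hsub : {p : EuclideanSpace ℝ (Fin m) × (Fin N → EuclideanSpace ℝ (Fin m)) |
          ¬(p.1 ∈ P ∧ ∀ j, p.2 j ∈ P)} ⊆
          (Pᶜ ×ˢ univ) ∪ (univ ×ˢ {v | ∀ j, v j ∈ P}ᶜ) := by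
        intro p hp
        by_cases h1 : p.1 ∈ P
        · exact Or.inr ⟨trivial, fun h2 => hp ⟨h1, h2⟩⟩
        · exact Or.inl ⟨h1, trivial⟩
      refine measure_mono_null hsub (measure_union_null ?_ ?_) <;>
        rw [Measure.prod_prod] <;> simp [hsupp, hQ]
    have hg_int : Integrable g (μ.prod ν) := by
      refine Integrable.mono' (integrable_const ((R + N * R) ^ 2))
        hgcont.aestronglyMeasurable ?_
      filter_upwards [haeprod] with p hp
      rw [Real.norm_eq_abs, abs_of_nonneg (by positivity)]
      have h1 : ‖(p.1 - x) + S p.2‖ ≤ R + N * R :=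
        le_trans (norm_add_le _ _) (add_le_add (hR _ hp.1) (hSnorm _ hp.2))
      exact pow_le_pow_left₀ (norm_nonneg _) h1 2
    have hS_int : Integrable (fun v => ‖S v‖ ^ 2) ν := by
      refine Integrable.mono' (integrable_const ((N * R) ^ 2))
        (hScont.norm.pow 2).aestronglyMeasurable ?_
      filter_upwards [aux_ae_pi_mem μ hsupp N] with v hv
      rw [Real.norm_eq_abs, abs_of_nonneg (by positivity)]
      exact pow_le_pow_left₀ (norm_nonneg _) (hSnorm _ hv) 2
    have hinner : ∀ v, ∫ a, g (a, v) ∂μ = (∫ a, ‖a - x‖ ^ 2 ∂μ) + ‖S v‖ ^ 2 := by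
      intro v
      have hi_int : Integrable (fun a => ⟪a - x, S v⟫) μ := by
        refine Integrable.mono' (integrable_const (R * ‖S v‖))
          ((continuous_id.sub continuous_const).inner continuous_const).aestronglyMeasurable ?_
        filter_upwards [hμP] with a ha
        calc ‖⟪a - x, S v⟫‖ ≤ ‖a - x‖ * ‖S v‖ := by
              rw [Real.norm_eq_abs]; exact abs_real_inner_le_norm _ _
        _ ≤ R * ‖S v‖ := mul_le_mul_of_nonneg_right (hR a ha) (norm_nonneg _)
      have h2_int : Integrable (fun a => 2 * ⟪a - x, S v⟫ + ‖S v‖ ^ 2) μ :=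
        (hi_int.const_mul 2).add (integrable_const _)
      have hexp : ∀ a : EuclideanSpace ℝ (Fin m),
          g (a, v) = ‖a - x‖ ^ 2 + (2 * ⟪a - x, S v⟫ + ‖S v‖ ^ 2) := by
        intro a
        rw [hg]
        simp only
        rw [norm_add_sq_real, add_assoc]
      calc ∫ a, g (a, v) ∂μ
          = ∫ a, (‖a - x‖ ^ 2 + (2 * ⟪a - x, S v⟫ + ‖S v‖ ^ 2)) ∂μ := by
            exact integral_congr_ae (ae_of_all _ hexp)
      _ = (∫ a, ‖a - x‖ ^ 2 ∂μ) + ∫ a, (2 * ⟪a - x, S v⟫ + ‖S v‖ ^ 2) ∂μ :=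
            integral_add hsq_int h2_int
      _ = (∫ a, ‖a - x‖ ^ 2 ∂μ) + ‖S v‖ ^ 2 := by
            congr 1
            rw [integral_add (hi_int.const_mul 2) (integrable_const _), integral_const,
              probReal_univ, one_smul, integral_const_mul]
            have : (∫ a, ⟪a - x, S v⟫ ∂μ) = 0 := by
              have hc : (∫ a, ⟪a - x, S v⟫ ∂μ) = ∫ a, ⟪S v, a - x⟫ ∂μ :=
                integral_congr_ae (ae_of_all _ fun a => real_inner_comm _ _)
              rw [hc, integral_inner hax_int, hmean, inner_zero_right]
            rw [this]
            ring
    have mp := measurePreserving_piFinSuccAbove (fun _ : Fin (N + 1) => μ) 0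
    have key : ∀ w : Fin (N + 1) → EuclideanSpace ℝ (Fin m),
        ‖(∑ i, w i) - ((N + 1 : ℕ) : ℝ) • x‖ ^ 2 =
          g (MeasurableEquiv.piFinSuccAbove (fun _ => EuclideanSpace ℝ (Fin m)) 0 w) := by
      intro w
      have hsum : ∑ i, w i = w 0 + ∑ j, w ((0 : Fin (N + 1)).succAbove j) :=
        Fin.sum_univ_succAbove w 0
      have hvec : (∑ i, w i) - ((N + 1 : ℕ) : ℝ) • x =
          (w 0 - x) + ((∑ j, w ((0 : Fin (N + 1)).succAbove j)) - (N : ℝ) • x) := by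
        rw [hsum, Nat.cast_succ, add_smul, one_smul]
        abel
      rw [hvec]
      rfl
    calc ∫ w, ‖(∑ i, w i) - ((N + 1 : ℕ) : ℝ) • x‖ ^ 2
          ∂(Measure.pi fun _ : Fin (N + 1) => μ)
        = ∫ w, g (MeasurableEquiv.piFinSuccAbove (fun _ => EuclideanSpace ℝ (Fin m)) 0 w)
          ∂(Measure.pi fun _ : Fin (N + 1) => μ) := by
          exact integral_congr_ae (ae_of_all _ key)
    _ = ∫ p, g p ∂(μ.prod ν) := mp.integral_comp' g
    _ = ∫ v, ∫ a, g (a, v) ∂μ ∂ν := integral_prod_symm g hg_int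
    _ = ∫ v, ((∫ a, ‖a - x‖ ^ 2 ∂μ) + ‖S v‖ ^ 2) ∂ν :=
          integral_congr_ae (ae_of_all _ hinner)
    _ = (∫ a, ‖a - x‖ ^ 2 ∂μ) + ∫ v, ‖S v‖ ^ 2 ∂ν := by
          rw [integral_add (integrable_const _) hS_int, integral_const, probReal_univ,
            one_smul]
    _ ≤ R ^ 2 + N * R ^ 2 := add_le_add hVle ih
    _ = ((N + 1 : ℕ) : ℝ) * R ^ 2 := by push_cast; ring


/-- If `B : P → M(P)` is any continuous section of the barycenter map and
`B_N(f)(x) = ∫ f dB_x^N`, then `B_N(f) → f` uniformly on `P` for every `f ∈ C(P)`. -/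
theorem bernsteinApprox_tendstoUniformlyOn
    {m : ℕ} (P : Set (EuclideanSpace ℝ (Fin m)))
    (hP : ∃ V : Finset (EuclideanSpace ℝ (Fin m)),
      P = convexHull ℝ (V : Set (EuclideanSpace ℝ (Fin m))))
    (hPo : (interior P).Nonempty)
    (B : EuclideanSpace ℝ (Fin m) → Measure (EuclideanSpace ℝ (Fin m)))
    (hprob : ∀ x ∈ P, IsProbabilityMeasure (B x))
    (hsupp : ∀ x ∈ P, B x Pᶜ = 0)
    (hbary : ∀ x ∈ P, (∫ z, z ∂(B x)) = x)
    (hcont : ∀ f : EuclideanSpace ℝ (Fin m) → ℂ, ContinuousOn f P →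
      ContinuousOn (fun x => ∫ z, f z ∂(B x)) P)
    (f : EuclideanSpace ℝ (Fin m) → ℂ) (hf : ContinuousOn f P) :
    TendstoUniformlyOn (fun (N : ℕ) (x : EuclideanSpace ℝ (Fin m)) =>
      ∫ z, f z ∂(dilConvPow (B x) N)) f atTop P := by
  classical
  obtain ⟨Vs, hPV⟩ := hP
  have hPc : IsCompact P := by rw [hPV]; exact Vs.finite_toSet.isCompact_convexHull ℝ
  have hPconv : Convex ℝ P := by rw [hPV]; exact convex_convexHull ℝ _
  have hPmeas : MeasurableSet P := hPc.isClosed.measurableSet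
  obtain ⟨R₀, hR₀⟩ := hPc.isBounded.exists_norm_le
  set R : ℝ := 2 * |R₀| with hRdef
  have hRnn : 0 ≤ R := by positivity
  have hRP : ∀ x ∈ P, ∀ z ∈ P, ‖z - x‖ ≤ R := by
    intro x hx z hz
    calc ‖z - x‖ ≤ ‖z‖ + ‖x‖ := norm_sub_le _ _
    _ ≤ |R₀| + |R₀| := add_le_add ((hR₀ z hz).trans (le_abs_self _))
        ((hR₀ x hx).trans (le_abs_self _))
    _ = R := by rw [hRdef]; ring
  obtain ⟨M₀, hM₀⟩ := hPc.exists_bound_of_continuousOn hf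
  set M : ℝ := |M₀| with hMdef
  have hMnn : 0 ≤ M := abs_nonneg _
  have hM : ∀ z ∈ P, ‖f z‖ ≤ M := fun z hz => (hM₀ z hz).trans (le_abs_self _)
  have hUC := hPc.uniformContinuousOn_of_continuous hf
  rw [Metric.tendstoUniformlyOn_iff]
  intro ε hε
  rw [Metric.uniformContinuousOn_iff] at hUC
  obtain ⟨δ, hδpos, hδ⟩ := hUC (ε / 2) (by linarith)
  have hK : Tendsto (fun N : ℕ => (2 * M * R ^ 2 / δ ^ 2) / N) atTop (𝓝 0) :=
    tendsto_const_div_atTop_nhds_zero_nat _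
  have hev : ∀ᶠ N : ℕ in atTop, (2 * M * R ^ 2 / δ ^ 2) / N < ε / 2 :=
    hK.eventually (gt_mem_nhds (by linarith))
  filter_upwards [hev, eventually_ge_atTop 1] with N hN hN1
  intro x hx
  haveI := hprob x hx
  have hμsupp := hsupp x hx
  have hμbary := hbary x hx
  set μ := B x with hμdef
  have hμP : ∀ᵐ a ∂μ, a ∈ P := by rw [ae_iff]; exact hμsupp
  set φ : (Fin N → EuclideanSpace ℝ (Fin m)) → EuclideanSpace ℝ (Fin m) :=
    fun w => (N : ℝ)⁻¹ • ∑ i, w i with hφdef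
  have hφc : Continuous φ :=
    (continuous_const_smul ((N : ℝ)⁻¹)).comp (continuous_finset_sum _ fun i _ => continuous_apply i)
  have hmap : dilConvPow μ N = Measure.map φ (Measure.pi fun _ : Fin N => μ) := rfl
  have hNne : (N : ℝ) ≠ 0 := by
    exact_mod_cast Nat.one_le_iff_ne_zero.mp hN1
  have hφP : ∀ w : Fin N → EuclideanSpace ℝ (Fin m), (∀ i, w i ∈ P) → φ w ∈ P := by
    intro w hw
    have h1 : φ w = ∑ i, (N : ℝ)⁻¹ • w i := Finset.smul_sum
    rw [h1]
    refine hPconv.sum_mem (fun i _ => by positivity) ?_ (fun i _ => hw i)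
    rw [Finset.sum_const, Finset.card_univ, Fintype.card_fin, nsmul_eq_mul]
    field_simp
  have haeφ : ∀ᵐ w ∂(Measure.pi fun _ : Fin N => μ), φ w ∈ P := by
    filter_upwards [aux_ae_pi_mem μ hμsupp N] with w hw using hφP w hw
  have hνsupp : (dilConvPow μ N) Pᶜ = 0 := by
    rw [hmap, Measure.map_apply hφc.measurable hPmeas.compl]
    rw [ae_iff] at haeφ
    exact haeφ
  have hνmem : ∀ᵐ z ∂(dilConvPow μ N), z ∈ P := by
    rw [ae_iff]; exact hνsupp
  haveI : IsProbabilityMeasure (dilConvPow μ N) := by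
    rw [hmap]; exact Measure.isProbabilityMeasure_map hφc.measurable.aemeasurable
  have hfAESM : AEStronglyMeasurable f (dilConvPow μ N) := by
    have h1 := hf.aestronglyMeasurable (μ := dilConvPow μ N) hPmeas
    rwa [Measure.restrict_eq_self_of_ae_mem hνmem] at h1
  have hf_int : Integrable f (dilConvPow μ N) := by
    refine Integrable.mono' (integrable_const M) hfAESM ?_
    filter_upwards [hνmem] with z hz using hM z hz
  have hsqm : ∫ z, ‖z - x‖ ^ 2 ∂(dilConvPow μ N) ≤ R ^ 2 / N := by
    have h1 : ∫ z, ‖z - x‖ ^ 2 ∂(dilConvPow μ N)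
        = ∫ w, ‖φ w - x‖ ^ 2 ∂(Measure.pi fun _ : Fin N => μ) := by
      rw [hmap]
      exact integral_map hφc.measurable.aemeasurable
        ((continuous_id.sub continuous_const).norm.pow 2).aestronglyMeasurable
    have h2 : ∀ w : Fin N → EuclideanSpace ℝ (Fin m),
        ‖φ w - x‖ ^ 2 = ((N : ℝ)⁻¹) ^ 2 * ‖(∑ i, w i) - (N : ℝ) • x‖ ^ 2 := by
      intro w
      have h3 : φ w - x = (N : ℝ)⁻¹ • ((∑ i, w i) - (N : ℝ) • x) := by
        rw [smul_sub, smul_smul, inv_mul_cancel₀ hNne, one_smul]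
      rw [h3, norm_smul, mul_pow, Real.norm_eq_abs, sq_abs]
    rw [h1]
    calc ∫ w, ‖φ w - x‖ ^ 2 ∂(Measure.pi fun _ : Fin N => μ)
        = ((N : ℝ)⁻¹) ^ 2 * ∫ w, ‖(∑ i, w i) - (N : ℝ) • x‖ ^ 2
            ∂(Measure.pi fun _ : Fin N => μ) := by
          rw [← integral_const_mul]
          exact integral_congr_ae (ae_of_all _ h2)
    _ ≤ ((N : ℝ)⁻¹) ^ 2 * (N * R ^ 2) :=
          mul_le_mul_of_nonneg_left
            (aux_sum_sq μ hμsupp x hμbary (fun z hz => hRP x hx z hz) N)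
            (by positivity)
    _ = R ^ 2 / N := by field_simp
  set c : ℝ := 2 * M / δ ^ 2 with hcdef
  have hc0 : 0 ≤ c := by positivity
  have hptwise : ∀ᵐ z ∂(dilConvPow μ N), ‖f z - f x‖ ≤ ε / 2 + c * ‖z - x‖ ^ 2 := by
    filter_upwards [hνmem] with z hz
    by_cases hd : dist z x < δ
    · have h1 : dist (f z) (f x) < ε / 2 := hδ z hz x hx hd
      rw [dist_eq_norm] at h1
      have h2 : 0 ≤ c * ‖z - x‖ ^ 2 := by positivity
      linarith
    · push_neg at hd
      have h1 : ‖f z - f x‖ ≤ 2 * M := by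
        calc ‖f z - f x‖ ≤ ‖f z‖ + ‖f x‖ := norm_sub_le _ _
        _ ≤ M + M := add_le_add (hM z hz) (hM x hx)
        _ = 2 * M := by ring
      have h2 : δ ^ 2 ≤ ‖z - x‖ ^ 2 := by
        have h3 : δ ≤ ‖z - x‖ := by rw [← dist_eq_norm]; exact hd
        exact pow_le_pow_left₀ (le_of_lt hδpos) h3 2
      have h3 : 2 * M ≤ c * ‖z - x‖ ^ 2 := by
        calc 2 * M = c * δ ^ 2 := by rw [hcdef]; field_simp
        _ ≤ c * ‖z - x‖ ^ 2 := mul_le_mul_of_nonneg_left h2 hc0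
      linarith
  have hsub_int : Integrable (fun z => f z - f x) (dilConvPow μ N) :=
    hf_int.sub (integrable_const _)
  have hnorm_int : Integrable (fun z => ‖f z - f x‖) (dilConvPow μ N) := hsub_int.norm
  have hsqz_int : Integrable (fun z => ‖z - x‖ ^ 2) (dilConvPow μ N) := by
    refine Integrable.mono' (integrable_const (R ^ 2))
      ((continuous_id.sub continuous_const).norm.pow 2).aestronglyMeasurable ?_
    filter_upwards [hνmem] with z hz
    rw [Real.norm_eq_abs, abs_of_nonneg (by positivity)]
    exact pow_le_pow_left₀ (norm_nonneg _) (hRP x hx z hz) 2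
  have key : dist (f x) (∫ z, f z ∂(dilConvPow μ N)) ≤ ε / 2 + c * (R ^ 2 / N) := by
    rw [dist_comm, dist_eq_norm]
    have h0 : (∫ z, f z ∂(dilConvPow μ N)) - f x
        = ∫ z, (f z - f x) ∂(dilConvPow μ N) := by
      rw [integral_sub hf_int (integrable_const _), integral_const, probReal_univ,
        one_smul]
    rw [h0]
    calc ‖∫ z, (f z - f x) ∂(dilConvPow μ N)‖
        ≤ ∫ z, ‖f z - f x‖ ∂(dilConvPow μ N) := norm_integral_le_integral_norm _
    _ ≤ ∫ z, (ε / 2 + c * ‖z - x‖ ^ 2) ∂(dilConvPow μ N) :=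
        integral_mono_ae hnorm_int ((integrable_const _).add (hsqz_int.const_mul c)) hptwise
    _ = ε / 2 + c * ∫ z, ‖z - x‖ ^ 2 ∂(dilConvPow μ N) := by
        rw [integral_add (integrable_const _) (hsqz_int.const_mul c), integral_const,
          probReal_univ, one_smul, integral_const_mul]
    _ ≤ ε / 2 + c * (R ^ 2 / N) := by
        have h4 := mul_le_mul_of_nonneg_left hsqm hc0
        linarith
  have hfin : c * (R ^ 2 / N) = (2 * M * R ^ 2 / δ ^ 2) / N := by
    rw [hcdef]; ring
  calc dist (f x) (∫ z, f z ∂(dilConvPow (B x) N)) ≤ ε / 2 + c * (R ^ 2 / N) := key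
  _ = ε / 2 + (2 * M * R ^ 2 / δ ^ 2) / N := by rw [hfin]
  _ < ε / 2 + ε / 2 := by linarith
  _ = ε := by ring


end
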